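/- In a commutative idempotent involutive residuated lattice, for a negative element a (a ≤ 1): a ≤ 0 if and only if for all x, a·x = a implies a·¬x = a. -/
import Mathlib


/-- A commutative idempotent involutive residuated lattice. -/
class CIdInRL (α : Type*) extends Lattice α, CommMonoid α, Zero α where
  arrow : α → α → α
  residuation : ∀ x y z : α, x * y ≤ z ↔ y ≤ arrow x z
  idem : ∀ x : α, x * x = x
  involutive : ∀ x : α, arrow (arrow x 0) 0 = x

namespace CIdInRL
variable {α : Type*} [CIdInRL α]
/-- linear negation ¬x := x → 0 -/
def neg (x : α) : α := arrow x 0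
/-- 0_x := x ∧ ¬x -/
def zx (x : α) : α := x ⊓ neg x
/-- 1_x := x ∨ ¬x -/
def ox (x : α) : α := x ⊔ neg x
/-- monoidal order x ⊑ y iff x·y = x -/
def mleq (x y : α) : Prop := x * y = x
end CIdInRL

namespace CIdInRLAux
open CIdInRL
variable {α : Type*} [CIdInRL α]

lemma mul_le_mul_right' {y z : α} (h : y ≤ z) (x : α) : x * y ≤ x * z := by
  have h1 : z ≤ arrow x (x * z) := (residuation x z (x * z)).mp le_rfl
  exact (residuation x y (x * z)).mpr (le_trans h h1)

lemma mul_le_mul_left' {y z : α} (h : y ≤ z) (x : α) : y * x ≤ z * x := by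
  rw [mul_comm y x, mul_comm z x]; exact mul_le_mul_right' h x

lemma mul_neg_le (x : α) : x * neg x ≤ 0 :=
  (residuation x (neg x) 0).mpr le_rfl

lemma neg_antitone {x y : α} (h : x ≤ y) : neg y ≤ neg x := by
  have : x * neg y ≤ 0 := le_trans (mul_le_mul_left' h (neg y)) (mul_neg_le y)
  exact (residuation x (neg y) 0).mp this

lemma neg_one_eq_zero : (neg 1 : α) = 0 := by
  apply le_antisymm
  · have : (1 : α) * neg 1 ≤ 0 := mul_neg_le 1
    rwa [one_mul] at this
  · exact (residuation 1 0 0).mp (by rw [one_mul])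

end CIdInRLAux

open CIdInRL CIdInRLAux in
theorem stmt12 {α : Type*} [CIdInRL α] (a : α) (ha : a ≤ 1) :
    a ≤ 0 ↔ ∀ x : α, a * x = a → a * neg x = a := by
  constructor
  · intro h0 x hx
    -- a ≤ neg x
    have hax0 : a * x ≤ 0 := hx.le.trans h0
    have hanx : a ≤ neg x := (residuation x a 0).mp (by rwa [mul_comm])
    -- a ≤ x
    have hax : a ≤ x := by
      calc a = a * x := hx.symm
        _ ≤ 1 * x := mul_le_mul_left' ha x
        _ = x := one_mul x
    -- neg x ≤ neg a
    have hnxna : neg x ≤ neg a := neg_antitone hax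
    -- neg a * neg x ≤ neg a
    have key : neg a * neg x ≤ neg a := by
      calc neg a * neg x ≤ neg a * neg a := mul_le_mul_right' hnxna (neg a)
        _ = neg a := idem (neg a)
    -- a * neg x ≤ a
    have h1 : neg a * (a * neg x) ≤ 0 := by
      have : a * (neg a * neg x) ≤ a * neg a := mul_le_mul_right' key a
      have h2 : a * (neg a * neg x) ≤ 0 := le_trans this (mul_neg_le a)
      calc neg a * (a * neg x) = a * (neg a * neg x) := mul_left_comm (neg a) a (neg x)
        _ ≤ 0 := h2
    have h3 : a * neg x ≤ arrow (neg a) 0 := (residuation (neg a) (a * neg x) 0).mp h1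
    have h4 : a * neg x ≤ a := by
      have := involutive (α := α) a
      unfold neg at h3
      rwa [this] at h3
    -- a ≤ a * neg x
    have h5 : a ≤ a * neg x := by
      calc a = a * a := (idem a).symm
        _ ≤ a * neg x := mul_le_mul_right' hanx a
    exact le_antisymm h4 h5
  · intro H
    have h1 : a * (1 : α) = a := mul_one a
    have h2 := H 1 h1
    rw [neg_one_eq_zero] at h2
    calc a = a * 0 := h2.symm
      _ ≤ 1 * 0 := mul_le_mul_left' ha 0
      _ = 0 := one_mul 0
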